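/- The map g ↦ (g⁻¹·∞, g⁻¹·0) from the semigroup S of SL(2,ℤ)-matrices with nonnegative entries to the set of positively oriented left primitive segments (i.e., ordered pairs (α,β) with -∞ ≤ α < β ≤ 0, both in P¹(ℚ), of the form (h(∞), h(0)) for some h ∈ GL(2,ℤ)) is a bijection. -/

import Mathlib

/-- The action of an integer 2×2 matrix on `P¹(ℚ) = ℚ ∪ {∞}` by fractional
linear transformations, with `∞` encoded as `none`. -/
def flin (h : Matrix (Fin 2) (Fin 2) ℤ) : Option ℚ → Option ℚ
  | none => if (h 1 0 : ℚ) = 0 then none else some ((h 0 0 : ℚ) / (h 1 0 : ℚ))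
  | some x => if (h 1 0 : ℚ) * x + (h 1 1 : ℚ) = 0 then none
      else some (((h 0 0 : ℚ) * x + (h 0 1 : ℚ)) / ((h 1 0 : ℚ) * x + (h 1 1 : ℚ)))

/-- On left segments, `∞ = -∞` is smaller than every rational. -/
def oLT : Option ℚ → Option ℚ → Prop
  | none, none => False
  | none, some _ => True
  | some _, none => False
  | some x, some y => x < y

/-- `≤ 0` on `P¹(ℚ)` where `none = -∞`. -/
def oNonpos : Option ℚ → Prop
  | none => True
  | some x => x ≤ 0

/-- The set of positively oriented left primitive segments: pairs `(α,β)` with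
`-∞ ≤ α < β ≤ 0` of the form `(h(∞), h(0))` for some `h ∈ GL(2,ℤ)`. -/
def leftPrimitive : Set (Option ℚ × Option ℚ) :=
  {p | (∃ h : (Matrix (Fin 2) (Fin 2) ℤ)ˣ,
          p.1 = flin h.1 none ∧ p.2 = flin h.1 (some 0)) ∧
    oLT p.1 p.2 ∧ oNonpos p.1 ∧ oNonpos p.2}

/-- `g ↦ (g⁻¹·∞, g⁻¹·0)` is a bijection from the semigroup `S` of
`SL(2,ℤ)`-matrices with nonnegative entries onto the set of positively oriented
left primitive segments. -/
lemma inv_coe (g : Matrix.SpecialLinearGroup (Fin 2) ℤ) :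
    (g⁻¹).1 = !![g.1 1 1, -(g.1 0 1); -(g.1 1 0), g.1 0 0] := by
  rw [Matrix.SpecialLinearGroup.SL2_inv_expl]
  ext i j; fin_cases i <;> fin_cases j <;> simp

lemma flin_inv_none (g : Matrix.SpecialLinearGroup (Fin 2) ℤ) : flin (g⁻¹).1 none =
    if (g.1 1 0 : ℚ) = 0 then none else some (-((g.1 1 1 : ℚ) / (g.1 1 0 : ℚ))) := by
  rw [inv_coe]; simp [flin, div_neg, neg_eq_zero]

lemma flin_inv_zero (g : Matrix.SpecialLinearGroup (Fin 2) ℤ) : flin (g⁻¹).1 (some 0) =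
    if (g.1 0 0 : ℚ) = 0 then none else some (-((g.1 0 1 : ℚ) / (g.1 0 0 : ℚ))) := by
  rw [inv_coe]; simp [flin, neg_div, neg_eq_zero]

lemma det_eq (g : Matrix.SpecialLinearGroup (Fin 2) ℤ) :
    g.1 0 0 * g.1 1 1 - g.1 0 1 * g.1 1 0 = 1 := by
  have := g.2; rwa [Matrix.det_fin_two] at this

lemma a_pos (g : Matrix.SpecialLinearGroup (Fin 2) ℤ) (hg : ∀ i j, 0 ≤ g.1 i j) :
    0 < g.1 0 0 := by
  have hd := det_eq g
  have h1 := hg 0 0; have h2 := hg 0 1; have h3 := hg 1 0; have h4 := hg 1 1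
  rcases h1.lt_or_eq with h | h
  · exact h
  · nlinarith

lemma mapsTo : Set.MapsTo
      (fun g : Matrix.SpecialLinearGroup (Fin 2) ℤ =>
        (flin (g⁻¹).1 none, flin (g⁻¹).1 (some 0)))
      {g | ∀ i j, 0 ≤ g.1 i j}
      leftPrimitive := by
  intro g hg
  simp only [Set.mem_setOf_eq] at hg
  have hd := det_eq g
  have ha := a_pos g hg
  have haQ : (0:ℚ) < (g.1 0 0 : ℚ) := by exact_mod_cast ha
  refine ⟨⟨⟨(g⁻¹).1, g.1, ?_, ?_⟩, rfl, rfl⟩, ?_, ?_, ?_⟩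
  · rw [← Matrix.SpecialLinearGroup.coe_mul, inv_mul_cancel]; rfl
  · rw [← Matrix.SpecialLinearGroup.coe_mul, mul_inv_cancel]; rfl
  · -- oLT
    simp only [flin_inv_none, flin_inv_zero]
    rcases eq_or_lt_of_le (hg 1 0) with hc | hc
    · rw [if_pos (by exact_mod_cast hc.symm), if_neg (by positivity)]
      trivial
    · have hcQ : (0:ℚ) < (g.1 1 0 : ℚ) := by exact_mod_cast hc
      rw [if_neg (by positivity), if_neg (by positivity)]
      show -((g.1 1 1 : ℚ) / _) < -((g.1 0 1 : ℚ) / _)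
      rw [neg_lt_neg_iff, div_lt_div_iff₀ haQ hcQ]
      have : (g.1 0 1 : ℚ) * g.1 1 0 + 1 = g.1 0 0 * g.1 1 1 := by exact_mod_cast by linarith
      nlinarith
  · -- oNonpos fst
    simp only [flin_inv_none]
    split
    · trivial
    · show -((g.1 1 1 : ℚ) / (g.1 1 0 : ℚ)) ≤ 0
      have h3 : (0:ℚ) ≤ (g.1 1 0 : ℚ) := by exact_mod_cast hg 1 0
      have h4 : (0:ℚ) ≤ (g.1 1 1 : ℚ) := by exact_mod_cast hg 1 1
      simp [neg_nonpos]; positivity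
  · simp only [flin_inv_zero]
    rw [if_neg (by positivity)]
    show -((g.1 0 1 : ℚ) / (g.1 0 0 : ℚ)) ≤ 0
    have h2 : (0:ℚ) ≤ (g.1 0 1 : ℚ) := by exact_mod_cast hg 0 1
    simp [neg_nonpos]; positivity

lemma ratio_eq {a b a' b' : ℤ} (ha : 0 < a) (ha' : 0 < a') (cop : IsCoprime a b)
    (cop' : IsCoprime a' b') (h : (b:ℚ)/(a:ℚ) = (b':ℚ)/(a':ℚ)) : a = a' ∧ b = b' := by
  have haQ : (0:ℚ) < (a:ℚ) := by exact_mod_cast ha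
  have haQ' : (0:ℚ) < (a':ℚ) := by exact_mod_cast ha'
  rw [div_eq_div_iff haQ.ne' haQ'.ne'] at h
  have hZ : b * a' = b' * a := by exact_mod_cast h
  have d1 : a ∣ a' := cop.dvd_of_dvd_mul_left ⟨b', by linarith [hZ]⟩
  have d2 : a' ∣ a := cop'.dvd_of_dvd_mul_left ⟨b, by linarith [hZ]⟩
  have haa : a = a' := Int.dvd_antisymm ha.le ha'.le d1 d2
  refine ⟨haa, ?_⟩
  subst haa
  exact mul_right_cancel₀ ha.ne' hZ

lemma injOn : Set.InjOn
      (fun g : Matrix.SpecialLinearGroup (Fin 2) ℤ =>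
        (flin (g⁻¹).1 none, flin (g⁻¹).1 (some 0)))
      {g | ∀ i j, 0 ≤ g.1 i j} := by
  intro g hg g' hg' heq
  simp only [Set.mem_setOf_eq] at hg hg'
  have hd := det_eq g; have hd' := det_eq g'
  have ha := a_pos g hg; have ha' := a_pos g' hg'
  have haQ : (0:ℚ) < (g.1 0 0 : ℚ) := by exact_mod_cast ha
  have haQ' : (0:ℚ) < (g'.1 0 0 : ℚ) := by exact_mod_cast ha'
  have h1 := congrArg Prod.fst heq
  have h2 := congrArg Prod.snd heq
  simp only [flin_inv_none, flin_inv_zero] at h1 h2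
  rw [if_neg haQ.ne', if_neg haQ'.ne'] at h2
  have copab : IsCoprime (g.1 0 0) (g.1 0 1) := ⟨g.1 1 1, -(g.1 1 0), by linarith⟩
  have copab' : IsCoprime (g'.1 0 0) (g'.1 0 1) := ⟨g'.1 1 1, -(g'.1 1 0), by linarith⟩
  have hb : g.1 0 0 = g'.1 0 0 ∧ g.1 0 1 = g'.1 0 1 := by
    refine ratio_eq ha ha' copab copab' ?_
    have := Option.some.inj h2
    have := neg_injective this
    linarith [this]
  have hcd : g.1 1 0 = g'.1 1 0 ∧ g.1 1 1 = g'.1 1 1 := by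
    rcases eq_or_lt_of_le (hg 1 0) with hc | hc
    · -- c = 0 on left
      rw [if_pos (by exact_mod_cast hc.symm)] at h1
      rcases eq_or_lt_of_le (hg' 1 0) with hc' | hc'
      · have e1 : g.1 0 0 * g.1 1 1 = 1 := by rw [← hc] at hd; linarith
        have e1' : g'.1 0 0 * g'.1 1 1 = 1 := by rw [← hc'] at hd'; linarith
        have hdd : g.1 1 1 = 1 := by
          rcases Int.mul_eq_one_iff_eq_one_or_neg_one.mp e1 with ⟨_, h⟩ | ⟨h, _⟩
          · exact h
          · omega
        have hdd' : g'.1 1 1 = 1 := by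
          rcases Int.mul_eq_one_iff_eq_one_or_neg_one.mp e1' with ⟨_, h⟩ | ⟨h, _⟩
          · exact h
          · omega
        exact ⟨by rw [← hc, ← hc'], by omega⟩
      · have : (0:ℚ) < (g'.1 1 0 : ℚ) := by exact_mod_cast hc'
        rw [if_neg this.ne'] at h1
        exact absurd h1 (by simp)
    · have hcQ : (0:ℚ) < (g.1 1 0 : ℚ) := by exact_mod_cast hc
      rw [if_neg hcQ.ne'] at h1
      rcases eq_or_lt_of_le (hg' 1 0) with hc' | hc'
      · rw [if_pos (by exact_mod_cast hc'.symm)] at h1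
        exact absurd h1 (by simp)
      · have hcQ' : (0:ℚ) < (g'.1 1 0 : ℚ) := by exact_mod_cast hc'
        rw [if_neg hcQ'.ne'] at h1
        refine ratio_eq hc hc' ⟨-(g.1 0 1), g.1 0 0, by linarith⟩
          ⟨-(g'.1 0 1), g'.1 0 0, by linarith⟩ ?_
        have := neg_injective (Option.some.inj h1)
        linarith [this]
  ext i j
  fin_cases i <;> fin_cases j
  exacts [hb.1, hb.2, hcd.1, hcd.2]

lemma surjOn : Set.SurjOn
      (fun g : Matrix.SpecialLinearGroup (Fin 2) ℤ =>
        (flin (g⁻¹).1 none, flin (g⁻¹).1 (some 0)))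
      {g | ∀ i j, 0 ≤ g.1 i j}
      leftPrimitive := by
  rintro ⟨A, B⟩ ⟨⟨h, hA, hB⟩, hlt, hn1, hn2⟩
  simp only [flin] at hA hB
  simp only [mul_zero, zero_add] at hB
  set P := h.1 0 0 with hP
  set Q := h.1 1 0 with hQ
  set R := h.1 0 1 with hR
  set S := h.1 1 1 with hS
  -- determinant of h is ±1
  have hu : IsUnit (h.1.det) := (Matrix.isUnit_iff_isUnit_det h.1).mp h.isUnit
  have hdet : P * S - R * Q = 1 ∨ P * S - R * Q = -1 := by
    rw [Int.isUnit_iff, Matrix.det_fin_two] at hu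
    exact hu
  -- S ≠ 0
  have hSne : (S:ℚ) ≠ 0 := by
    intro h0
    rw [if_pos h0] at hB
    rw [hB] at hlt
    rcases hA' : A with _ | a <;> rw [hA'] at hlt <;> exact hlt
  rw [if_neg hSne] at hB
  have hSZ : S ≠ 0 := by exact_mod_cast fun h0 => hSne (by exact_mod_cast h0)
  rw [hB] at hn2
  have hRS : (R:ℚ)/(S:ℚ) ≤ 0 := hn2
  have hRSZ : R * S ≤ 0 := by
    have := div_nonpos_iff.mp hRS
    rcases this with ⟨h1, h2⟩ | ⟨h1, h2⟩
    · exact_mod_cast mul_nonpos_iff.mpr (Or.inl ⟨by exact_mod_cast h1, by exact_mod_cast h2⟩)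
    · exact_mod_cast mul_nonpos_iff.mpr (Or.inr ⟨by exact_mod_cast h1, by exact_mod_cast h2⟩)
  by_cases hQ0 : Q = 0
  · -- A = none
    rw [if_pos (by exact_mod_cast hQ0)] at hA
    -- P * S = ±1 so S = ±1
    have hSdvd : S ∣ 1 := by
      rcases hdet with hd | hd <;> rw [hQ0] at hd <;>
        [exact ⟨P, by linarith⟩; exact Dvd.intro (-P) (by linarith)]
    have hS1 : S = 1 ∨ S = -1 := Int.isUnit_iff.mp (isUnit_of_dvd_one hSdvd)
    refine ⟨⟨!![1, |R|; 0, 1], by simp [Matrix.det_fin_two_of]⟩, ?_, ?_⟩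
    · intro i j; fin_cases i <;> fin_cases j <;> simp [abs_nonneg]
    · refine (congrArg₂ Prod.mk (flin_inv_none _) (flin_inv_zero _)).trans ?_; simp only
      have e00 : (!![1, |R|; 0, 1] : Matrix (Fin 2) (Fin 2) ℤ) 0 0 = 1 := by simp
      have e01 : (!![1, |R|; 0, 1] : Matrix (Fin 2) (Fin 2) ℤ) 0 1 = |R| := by simp
      have e10 : (!![1, |R|; 0, 1] : Matrix (Fin 2) (Fin 2) ℤ) 1 0 = 0 := by simp
      show (if _ then _ else _, if _ then _ else _) = (A, B)
      rw [e00, e01, e10]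
      rw [if_pos (by norm_num), if_neg (by norm_num)]
      refine Prod.ext ?_ ?_
      · exact hA.symm
      · show some (-(((|R| : ℤ):ℚ) / ((1:ℤ):ℚ))) = B
        rw [hB]
        congr 1
        push_cast
        rw [div_one]
        rcases hS1 with h1 | h1 <;> rw [h1] at hRS ⊢ <;> push_cast at hRS ⊢
        · rw [div_one] at hRS ⊢
          rw [abs_of_nonpos hRS]; ring
        · rw [div_neg, div_one] at hRS ⊢
          rw [abs_of_nonneg (by linarith)]
  · -- Q ≠ 0 : A = some (P/Q)
    have hQne : (Q:ℚ) ≠ 0 := by exact_mod_cast hQ0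
    rw [if_neg hQne] at hA
    rw [hA, hB] at hlt
    have hltQ : (P:ℚ)/Q < (R:ℚ)/S := hlt
    have hPQ : (P:ℚ)/Q < 0 := lt_of_lt_of_le hltQ hRS
    have hPQZ : P * Q < 0 := by
      rcases div_neg_iff.mp hPQ with ⟨h1, h2⟩ | ⟨h1, h2⟩
      · exact_mod_cast mul_neg_of_pos_of_neg (by exact_mod_cast h1) (by exact_mod_cast h2)
      · exact_mod_cast mul_neg_of_neg_of_pos (by exact_mod_cast h1) (by exact_mod_cast h2)
    -- the determinant identity
    have fact1 : |S| * |P| - |R| * |Q| = 1 := by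
      rcases lt_or_gt_of_ne (fun h0 : Q = 0 => hQ0 h0) with hQn | hQp
      · -- Q < 0, so P > 0
        have hPpos : 0 < P := by nlinarith
        have hQQ : (0:ℚ) < -(Q:ℚ) := by exact_mod_cast (by linarith : (0:ℤ) < -Q)
        rcases lt_or_gt_of_ne hSZ with hSn | hSp
        · -- S < 0, R ≥ 0 ; cross: P*S < R*Q
          have hRpos : 0 ≤ R := by nlinarith
          have hSS : (0:ℚ) < -(S:ℚ) := by exact_mod_cast (by linarith : (0:ℤ) < -S)
          have cross : (P:ℚ) * S < R * Q := by
            rw [show (P:ℚ)/Q = (-(P:ℚ))/(-(Q:ℚ)) by rw [neg_div_neg_eq],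
              show (R:ℚ)/S = (-(R:ℚ))/(-(S:ℚ)) by rw [neg_div_neg_eq],
              div_lt_div_iff₀ hQQ hSS] at hltQ
            nlinarith [hltQ]
          have crossZ : P * S < R * Q := by exact_mod_cast cross
          have hd : P * S - R * Q = -1 := by rcases hdet with hd | hd; exacts [by linarith, hd]
          rw [abs_of_neg hSn, abs_of_pos hPpos, abs_of_nonneg hRpos, abs_of_neg hQn]
          linear_combination -hd
        · -- S > 0, R ≤ 0 ; cross: P*S > R*Q
          have hRneg : R ≤ 0 := by nlinarith
          have hSS : (0:ℚ) < (S:ℚ) := by exact_mod_cast hSp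
          have cross : (R:ℚ) * Q < P * S := by
            rw [show (P:ℚ)/Q = (-(P:ℚ))/(-(Q:ℚ)) by rw [neg_div_neg_eq],
              div_lt_div_iff₀ hQQ hSS] at hltQ
            nlinarith [hltQ]
          have crossZ : R * Q < P * S := by exact_mod_cast cross
          have hd : P * S - R * Q = 1 := by rcases hdet with hd | hd; exacts [hd, by linarith]
          rw [abs_of_pos hSp, abs_of_pos hPpos, abs_of_nonpos hRneg, abs_of_neg hQn]
          linear_combination hd
      · -- Q > 0, so P < 0
        have hPneg : P < 0 := by nlinarith
        have hQQ : (0:ℚ) < (Q:ℚ) := by exact_mod_cast hQp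
        rcases lt_or_gt_of_ne hSZ with hSn | hSp
        · -- S < 0, R ≥ 0 ; cross: P*S > R*Q
          have hRpos : 0 ≤ R := by nlinarith
          have hSS : (0:ℚ) < -(S:ℚ) := by exact_mod_cast (by linarith : (0:ℤ) < -S)
          have cross : (R:ℚ) * Q < P * S := by
            rw [show (R:ℚ)/S = (-(R:ℚ))/(-(S:ℚ)) by rw [neg_div_neg_eq],
              div_lt_div_iff₀ hQQ hSS] at hltQ
            nlinarith [hltQ]
          have crossZ : R * Q < P * S := by exact_mod_cast cross
          have hd : P * S - R * Q = 1 := by rcases hdet with hd | hd; exacts [hd, by linarith]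
          rw [abs_of_neg hSn, abs_of_neg hPneg, abs_of_nonneg hRpos, abs_of_pos hQp]
          linear_combination hd
        · -- S > 0, R ≤ 0 ; cross : P*S < R*Q
          have hRneg : R ≤ 0 := by nlinarith
          have hSS : (0:ℚ) < (S:ℚ) := by exact_mod_cast hSp
          have cross : (P:ℚ) * S < R * Q := by
            rw [div_lt_div_iff₀ hQQ hSS] at hltQ
            nlinarith [hltQ]
          have crossZ : P * S < R * Q := by exact_mod_cast cross
          have hd : P * S - R * Q = -1 := by rcases hdet with hd | hd; exacts [by linarith, hd]
          rw [abs_of_pos hSp, abs_of_neg hPneg, abs_of_nonpos hRneg, abs_of_pos hQp]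
          linear_combination -hd
    -- rational identities
    have fact2 : -((|P| : ℚ) / (|Q| : ℚ)) = (P:ℚ)/Q := by
      push_cast
      rw [← abs_div, abs_of_neg hPQ]; ring
    have fact3 : -((|R| : ℚ) / (|S| : ℚ)) = (R:ℚ)/S := by
      push_cast
      rw [← abs_div, abs_of_nonpos hRS]; ring
    refine ⟨⟨!![|S|, |R|; |Q|, |P|], by rw [Matrix.det_fin_two_of]; linarith [fact1]⟩, ?_, ?_⟩
    · intro i j; fin_cases i <;> fin_cases j <;> simp [abs_nonneg]
    · refine (congrArg₂ Prod.mk (flin_inv_none _) (flin_inv_zero _)).trans ?_; simp only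
      have e00 : (!![|S|, |R|; |Q|, |P|] : Matrix (Fin 2) (Fin 2) ℤ) 0 0 = |S| := by simp
      have e01 : (!![|S|, |R|; |Q|, |P|] : Matrix (Fin 2) (Fin 2) ℤ) 0 1 = |R| := by simp
      have e10 : (!![|S|, |R|; |Q|, |P|] : Matrix (Fin 2) (Fin 2) ℤ) 1 0 = |Q| := by simp
      have e11 : (!![|S|, |R|; |Q|, |P|] : Matrix (Fin 2) (Fin 2) ℤ) 1 1 = |P| := by simp
      show (if _ then _ else _, if _ then _ else _) = (A, B)
      rw [e00, e01, e10, e11]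
      have hQabs : ((|Q| : ℤ) : ℚ) ≠ 0 := by
        simpa using hQne
      have hSabs : ((|S| : ℤ) : ℚ) ≠ 0 := by
        simpa using hSne
      rw [if_neg hQabs, if_neg hSabs]
      refine Prod.ext ?_ ?_
      · show some (-(((|P| : ℤ):ℚ) / ((|Q| : ℤ):ℚ))) = A
        rw [hA]; congr 1
        rw [← fact2]; push_cast; ring
      · show some (-(((|R| : ℤ):ℚ) / ((|S| : ℤ):ℚ))) = B
        rw [hB]; congr 1
        rw [← fact3]; push_cast; ring

theorem stmt1 :
    Set.BijOn
      (fun g : Matrix.SpecialLinearGroup (Fin 2) ℤ =>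
        (flin (g⁻¹).1 none, flin (g⁻¹).1 (some 0)))
      {g | ∀ i j, 0 ≤ g.1 i j}
      leftPrimitive := by
  exact ⟨mapsTo, injOn, surjOn⟩
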